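/- Let S be a commutative semiring, n ≥ 2, and suppose M_n(S) is bi-ideal-free. Then the standard quasiordering ≤_S on S is downwards directed: for all a, b ∈ S there exists c ∈ S with c ≤_S a and c ≤_S b. -/
import Mathlib


/-- A semiring in the sense of the paper: associative `+` and `*`, `+` commutative,
`*` distributing over `+` from both sides; no zero or unity assumed. -/
class PSemiring (S : Type) extends AddCommSemigroup S, Semigroup S where
  left_distrib : ∀ a b c : S, a * (b + c) = a * b + a * c
  right_distrib : ∀ a b c : S, (a + b) * c = a * c + b * c

section Defs
variable {T : Type} [Add T] [Mul T]

def MulAbsorbing (w : T) : Prop := ∀ a : T, a * w = w ∧ w * a = w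
def AddAbsorbing (w : T) : Prop := ∀ a : T, a + w = w
def AddNeutral (w : T) : Prop := ∀ a : T, a + w = a
def BiAbsorbing (w : T) : Prop := MulAbsorbing w ∧ AddAbsorbing w
def IsZero (w : T) : Prop := MulAbsorbing w ∧ AddNeutral w
def IsUnity (w : T) : Prop := ∀ a : T, w * a = a ∧ a * w = a

def IsBiIdeal (I : Set T) : Prop :=
  I.Nonempty ∧ ∀ a ∈ I, ∀ s : T, a + s ∈ I ∧ a * s ∈ I ∧ s * a ∈ I

def IsCongruence (r : T → T → Prop) : Prop :=
  Equivalence r ∧ (∀ a b c d : T, r a b → r c d → r (a + c) (b + d)) ∧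
    (∀ a b c d : T, r a b → r c d → r (a * c) (b * d))

/-- The standard quasiordering on a semiring. -/
def leS (a b : T) : Prop := a = b ∨ ∃ c : T, a + c = b

/-- `addPow m b` is the `(m+1)`-fold sum `b + ⋯ + b`. -/
def addPow : ℕ → T → T
  | 0, b => b
  | m + 1, b => addPow m b + b

end Defs

def CongSimple (T : Type) [Add T] [Mul T] : Prop :=
  (∃ a b : T, a ≠ b) ∧
    ∀ r : T → T → Prop, IsCongruence r →
      (∀ a b : T, r a b ↔ a = b) ∨ (∀ a b : T, r a b)

def BiIdealSimple (T : Type) [Add T] [Mul T] : Prop :=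
  (∃ a b : T, a ≠ b) ∧
    ∀ I : Set T, IsBiIdeal I → (∃ w : T, I = {w}) ∨ I = Set.univ

def BiIdealFree (T : Type) [Add T] [Mul T] : Prop :=
  (∃ a b : T, a ≠ b) ∧ ∀ I : Set T, IsBiIdeal I → I = Set.univ

/-- Sum of a nonempty family indexed by `Fin (n+1)`. -/
def finSum {S : Type} [Add S] : ∀ {n : ℕ}, (Fin (n + 1) → S) → S
  | 0, f => f 0
  | n + 1, f => finSum (fun i : Fin (n + 1) => f i.castSucc) + f (Fin.last (n + 1))

/-- `Mat n S` is the semiring of `(n+1) × (n+1)` matrices over `S`. -/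
structure Mat (n : ℕ) (S : Type) where
  entry : Fin (n + 1) → Fin (n + 1) → S

instance {n : ℕ} {S : Type} [Add S] : Add (Mat n S) :=
  ⟨fun A B => ⟨fun i j => A.entry i j + B.entry i j⟩⟩

instance {n : ℕ} {S : Type} [Add S] [Mul S] : Mul (Mat n S) :=
  ⟨fun A B => ⟨fun i j => finSum (fun k => A.entry i k * B.entry k j)⟩⟩

/-- The constant matrix `ā`. -/
def Mat.const (n : ℕ) {S : Type} (a : S) : Mat n S := ⟨fun _ _ => a⟩



section Aux

theorem my_leS_refl {T : Type} [Add T] [Mul T] (a : T) : leS a a := Or.inl rfl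

theorem my_leS_add {T : Type} [Add T] [Mul T] (a c : T) : leS a (a + c) := Or.inr ⟨c, rfl⟩

theorem my_leS_trans {T : Type} [AddCommSemigroup T] [Mul T] {a b c : T} :
    leS a b → leS b c → leS a c := by
  rintro (rfl | ⟨x, rfl⟩) h2
  · exact h2
  · rcases h2 with rfl | ⟨y, rfl⟩
    · exact Or.inr ⟨x, rfl⟩
    · exact Or.inr ⟨x + y, (add_assoc a x y).symm⟩

variable {S : Type} [PSemiring S]

theorem my_leS_mul_right {a b : S} (h : leS a b) (c : S) : leS (a * c) (b * c) := by
  rcases h with rfl | ⟨x, rfl⟩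
  · exact Or.inl rfl
  · exact Or.inr ⟨x * c, (PSemiring.right_distrib a x c).symm⟩

theorem my_leS_finSum : ∀ {m : ℕ} (f : Fin (m + 1) → S) (k : Fin (m + 1)), leS (f k) (finSum f)
  | 0, f, k => by
    have hk : k = 0 := Fin.fin_one_eq_zero k
    subst hk; exact my_leS_refl _
  | m + 1, f, k => by
    cases k using Fin.lastCases with
    | last => exact Or.inr ⟨finSum fun i : Fin (m + 1) => f i.castSucc, add_comm _ _⟩
    | cast i =>
        exact my_leS_trans (my_leS_finSum (fun i : Fin (m + 1) => f i.castSucc) i)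
          (my_leS_add _ _)

theorem Mat.ext' {n : ℕ} {A B : Mat n S} (h : ∀ i j, A.entry i j = B.entry i j) : A = B := by
  cases A; cases B
  congr
  funext i j
  exact h i j

theorem finSum_add' : ∀ {m : ℕ} (f g : Fin (m + 1) → S),
    finSum (fun i => f i + g i) = finSum f + finSum g
  | 0, f, g => rfl
  | m + 1, f, g => by
    show finSum (fun i : Fin (m + 1) => f i.castSucc + g i.castSucc)
        + (f (Fin.last (m + 1)) + g (Fin.last (m + 1)))
        = (finSum fun i : Fin (m + 1) => f i.castSucc) + f (Fin.last (m + 1))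
          + ((finSum fun i : Fin (m + 1) => g i.castSucc) + g (Fin.last (m + 1)))
    rw [finSum_add' (fun i => f i.castSucc) (fun i => g i.castSucc)]
    rw [add_assoc, add_assoc]
    congr 1
    rw [← add_assoc, add_comm _ (f (Fin.last (m + 1))), add_assoc]

theorem mul_finSum' : ∀ {m : ℕ} (c : S) (f : Fin (m + 1) → S),
    c * finSum f = finSum (fun i => c * f i)
  | 0, c, f => rfl
  | m + 1, c, f => by
    show c * (finSum (fun i : Fin (m + 1) => f i.castSucc) + f (Fin.last (m + 1)))
        = finSum (fun i : Fin (m + 1) => c * f i.castSucc) + c * f (Fin.last (m + 1))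
    rw [PSemiring.left_distrib, mul_finSum' c (fun i => f i.castSucc)]

theorem finSum_mul' : ∀ {m : ℕ} (c : S) (f : Fin (m + 1) → S),
    finSum f * c = finSum (fun i => f i * c)
  | 0, c, f => rfl
  | m + 1, c, f => by
    show (finSum (fun i : Fin (m + 1) => f i.castSucc) + f (Fin.last (m + 1))) * c
        = finSum (fun i : Fin (m + 1) => f i.castSucc * c) + f (Fin.last (m + 1)) * c
    rw [PSemiring.right_distrib, finSum_mul' c (fun i => f i.castSucc)]

theorem finSum_swap' : ∀ {m p : ℕ} (h : Fin (m + 1) → Fin (p + 1) → S),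
    finSum (fun k => finSum (fun l => h k l)) = finSum (fun l => finSum (fun k => h k l))
  | 0, p, h => rfl
  | m + 1, p, h => by
    show finSum (fun k : Fin (m + 1) => finSum (fun l => h k.castSucc l))
        + finSum (fun l => h (Fin.last (m + 1)) l)
        = finSum (fun l => finSum (fun k : Fin (m + 2) => h k l))
    rw [finSum_swap' (fun k l => h k.castSucc l), ← finSum_add']
    rfl

theorem mat_add_assoc {n : ℕ} (X Y Z : Mat n S) : X + Y + Z = X + (Y + Z) :=
  Mat.ext' fun i j => add_assoc _ _ _

theorem mat_right_distrib {n : ℕ} (X C s : Mat n S) : (X + C) * s = X * s + C * s :=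
  Mat.ext' fun i j => by
    show finSum (fun k => (X.entry i k + C.entry i k) * s.entry k j)
        = finSum (fun k => X.entry i k * s.entry k j) + finSum (fun k => C.entry i k * s.entry k j)
    rw [← finSum_add']
    exact congrArg finSum (funext fun k => PSemiring.right_distrib _ _ _)

theorem mat_left_distrib {n : ℕ} (s X C : Mat n S) : s * (X + C) = s * X + s * C :=
  Mat.ext' fun i j => by
    show finSum (fun k => s.entry i k * (X.entry k j + C.entry k j))
        = finSum (fun k => s.entry i k * X.entry k j) + finSum (fun k => s.entry i k * C.entry k j)
    rw [← finSum_add']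
    exact congrArg finSum (funext fun k => PSemiring.left_distrib _ _ _)

theorem mat_mul_assoc {n : ℕ} (X Y Z : Mat n S) : X * Y * Z = X * (Y * Z) :=
  Mat.ext' fun i j => by
    show finSum (fun l => finSum (fun k => X.entry i k * Y.entry k l) * Z.entry l j)
        = finSum (fun k => X.entry i k * finSum (fun l => Y.entry k l * Z.entry l j))
    calc finSum (fun l => finSum (fun k => X.entry i k * Y.entry k l) * Z.entry l j)
        = finSum (fun l => finSum (fun k => X.entry i k * Y.entry k l * Z.entry l j)) :=
          congrArg finSum (funext fun l => finSum_mul' _ _)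
      _ = finSum (fun l => finSum (fun k => X.entry i k * (Y.entry k l * Z.entry l j))) :=
          congrArg finSum (funext fun l => congrArg finSum (funext fun k => mul_assoc _ _ _))
      _ = finSum (fun k => finSum (fun l => X.entry i k * (Y.entry k l * Z.entry l j))) :=
          finSum_swap' _
      _ = finSum (fun k => X.entry i k * finSum (fun l => Y.entry k l * Z.entry l j)) :=
          congrArg finSum (funext fun k => (mul_finSum' _ _).symm)

theorem mat_leS_mul_right {n : ℕ} {X Y : Mat n S} (h : leS X Y) (s : Mat n S) :
    leS (X * s) (Y * s) := by
  rcases h with rfl | ⟨C, rfl⟩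
  · exact Or.inl rfl
  · exact Or.inr ⟨C * s, (mat_right_distrib X C s).symm⟩

theorem mat_leS_mul_left {n : ℕ} {X Y : Mat n S} (h : leS X Y) (s : Mat n S) :
    leS (s * X) (s * Y) := by
  rcases h with rfl | ⟨C, rfl⟩
  · exact Or.inl rfl
  · exact Or.inr ⟨s * C, (mat_left_distrib s X C).symm⟩

theorem mat_leS_trans {n : ℕ} {X Y Z : Mat n S} (h1 : leS X Y) (h2 : leS Y Z) : leS X Z := by
  rcases h1 with rfl | ⟨C, rfl⟩
  · exact h2
  · rcases h2 with rfl | ⟨D, rfl⟩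
    · exact Or.inr ⟨C, rfl⟩
    · exact Or.inr ⟨C + D, (mat_add_assoc X C D).symm⟩

theorem mat_leS_entry {n : ℕ} {X Y : Mat n S} (h : leS X Y) (i j : Fin (n + 1)) :
    leS (X.entry i j) (Y.entry i j) := by
  rcases h with rfl | ⟨C, rfl⟩
  · exact Or.inl rfl
  · exact Or.inr ⟨C.entry i j, rfl⟩

theorem entry_mul_le {n : ℕ} (X Y : Mat n S) (i j k : Fin (n + 1)) :
    leS (X.entry i k * Y.entry k j) ((X * Y).entry i j) :=
  my_leS_finSum (fun k => X.entry i k * Y.entry k j) k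

end Aux

/-- auxiliary matrix: `a` on the diagonal, `b` elsewhere. -/
def auxA {S : Type} (n : ℕ) (a b : S) : Mat (n + 1) S :=
  ⟨fun i j => if i = j then a else b⟩

/-- auxiliary matrix: `a` at position `(0,0)`, `b` elsewhere. -/
def auxB {S : Type} (n : ℕ) (a b : S) : Mat (n + 1) S :=
  ⟨fun i j => if i = 0 ∧ j = 0 then a else b⟩

theorem auxA_entry {S : Type} (n : ℕ) (a b : S) (i j : Fin (n + 2)) :
    (auxA n a b).entry i j = if i = j then a else b := rfl

theorem auxB_entry {S : Type} (n : ℕ) (a b : S) (i j : Fin (n + 2)) :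
    (auxB n a b).entry i j = if i = 0 ∧ j = 0 then a else b := rfl

/-- if `S` is commutative and `M_n(S)` is bi-ideal-free for some
`n ≥ 2` (`Mat (n+1)` has size `n+2`), then `≤_S` is downwards directed. -/
theorem stmt15 {S : Type} [PSemiring S] (hc : ∀ a b : S, a * b = b * a) (n : ℕ)
    (h : BiIdealFree (Mat (n + 1) S)) :
    ∀ a b : S, ∃ c : S, leS c a ∧ leS c b := by
  intro a b
  have h10 : (1 : Fin (n + 1 + 1)) ≠ 0 := by simp [Fin.ext_iff]
  set I : Set (Mat (n + 1) S) :=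
    {X | leS (auxA n a b) X ∨ (∃ M, leS (auxA n a b * M) X) ∨
      (∃ M, leS (M * auxA n a b) X) ∨ ∃ M M', leS (M * auxA n a b * M') X} with hIdef
  have hbi : IsBiIdeal I := by
    constructor
    · exact ⟨auxA n a b, Or.inl (my_leS_refl _)⟩
    · rintro X hX s
      refine ⟨?_, ?_, ?_⟩
      · rcases hX with h1 | ⟨M, h1⟩ | ⟨M, h1⟩ | ⟨M, M', h1⟩
        · exact Or.inl (mat_leS_trans h1 (my_leS_add X s))
        · exact Or.inr (Or.inl ⟨M, mat_leS_trans h1 (my_leS_add X s)⟩)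
        · exact Or.inr (Or.inr (Or.inl ⟨M, mat_leS_trans h1 (my_leS_add X s)⟩))
        · exact Or.inr (Or.inr (Or.inr ⟨M, M', mat_leS_trans h1 (my_leS_add X s)⟩))
      · rcases hX with h1 | ⟨M, h1⟩ | ⟨M, h1⟩ | ⟨M, M', h1⟩
        · exact Or.inr (Or.inl ⟨s, mat_leS_mul_right h1 s⟩)
        · exact Or.inr (Or.inl ⟨M * s, by
            rw [← mat_mul_assoc]; exact mat_leS_mul_right h1 s⟩)
        · exact Or.inr (Or.inr (Or.inr ⟨M, s, mat_leS_mul_right h1 s⟩))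
        · exact Or.inr (Or.inr (Or.inr ⟨M, M' * s, by
            rw [← mat_mul_assoc]; exact mat_leS_mul_right h1 s⟩))
      · rcases hX with h1 | ⟨M, h1⟩ | ⟨M, h1⟩ | ⟨M, M', h1⟩
        · exact Or.inr (Or.inr (Or.inl ⟨s, mat_leS_mul_left h1 s⟩))
        · exact Or.inr (Or.inr (Or.inr ⟨s, M, by
            rw [mat_mul_assoc]; exact mat_leS_mul_left h1 s⟩))
        · exact Or.inr (Or.inr (Or.inl ⟨s * M, by
            rw [mat_mul_assoc]; exact mat_leS_mul_left h1 s⟩))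
        · exact Or.inr (Or.inr (Or.inr ⟨s * M, M', by
            rw [mat_mul_assoc s M (auxA n a b), mat_mul_assoc]
            exact mat_leS_mul_left h1 s⟩))
  have huniv : I = Set.univ := h.2 I hbi
  have hB : auxB n a b ∈ I := by rw [huniv]; trivial
  rw [hIdef, Set.mem_setOf_eq] at hB
  rcases hB with h1 | ⟨M, h1⟩ | ⟨M, h1⟩ | ⟨M, M', h1⟩
  · -- case A ≤ B : look at entry (1,1): a ≤ b
    have hab := mat_leS_entry h1 1 1
    rw [auxA_entry, auxB_entry, if_pos rfl, if_neg (fun hh => h10 hh.1)] at hab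
    exact ⟨a, my_leS_refl a, hab⟩
  · -- case A*M ≤ B
    have key : ∀ i j k, leS ((auxA n a b).entry i k * M.entry k j) ((auxB n a b).entry i j) :=
      fun i j k => my_leS_trans (entry_mul_le _ _ i j k) (mat_leS_entry h1 i j)
    have r1 : leS (a * M.entry 1 1) b := by
      have hk := key 1 1 1
      rwa [auxA_entry, auxB_entry, if_pos rfl, if_neg (fun hh => h10 hh.1)] at hk
    have r2 : leS (b * M.entry 1 0) a := by
      have hk := key 0 0 1
      rwa [auxA_entry, auxB_entry, if_neg (fun hh => h10 hh.symm), if_pos ⟨rfl, rfl⟩] at hk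
    have r3 : leS (a * M.entry 1 0) b := by
      have hk := key 1 0 1
      rwa [auxA_entry, auxB_entry, if_pos rfl, if_neg (fun hh => h10 hh.1)] at hk
    have r4 : leS (b * M.entry 1 1) b := by
      have hk := key 0 1 1
      rwa [auxA_entry, auxB_entry, if_neg (fun hh => h10 hh.symm),
        if_neg (fun hh => h10 hh.2)] at hk
    refine ⟨a * M.entry 1 0 * M.entry 1 1, ?_, ?_⟩
    · have e : a * M.entry 1 0 * M.entry 1 1 = a * M.entry 1 1 * M.entry 1 0 := by
        rw [mul_assoc, hc (M.entry 1 0) (M.entry 1 1), ← mul_assoc]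
      rw [e]
      exact my_leS_trans (my_leS_mul_right r1 (M.entry 1 0)) r2
    · exact my_leS_trans (my_leS_mul_right r3 (M.entry 1 1)) r4
  · -- case M*A ≤ B
    have key : ∀ i j k, leS (M.entry i k * (auxA n a b).entry k j) ((auxB n a b).entry i j) :=
      fun i j k => my_leS_trans (entry_mul_le _ _ i j k) (mat_leS_entry h1 i j)
    have s1 : leS (M.entry 1 1 * a) b := by
      have hk := key 1 1 1
      rwa [auxA_entry, auxB_entry, if_pos rfl, if_neg (fun hh => h10 hh.1)] at hk
    have s2 : leS (M.entry 0 1 * b) a := by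
      have hk := key 0 0 1
      rwa [auxA_entry, auxB_entry, if_neg h10, if_pos ⟨rfl, rfl⟩] at hk
    have s3 : leS (M.entry 0 1 * a) b := by
      have hk := key 0 1 1
      rwa [auxA_entry, auxB_entry, if_pos rfl, if_neg (fun hh => h10 hh.2)] at hk
    have s4 : leS (M.entry 1 1 * b) b := by
      have hk := key 1 0 1
      rwa [auxA_entry, auxB_entry, if_neg h10, if_neg (fun hh => h10 hh.1)] at hk
    refine ⟨M.entry 1 1 * a * M.entry 0 1, ?_, ?_⟩
    · have t : leS (b * M.entry 0 1) a := by
        rw [hc b (M.entry 0 1)]; exact s2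
      exact my_leS_trans (my_leS_mul_right s1 (M.entry 0 1)) t
    · have e : M.entry 1 1 * a * M.entry 0 1 = M.entry 0 1 * a * M.entry 1 1 := by
        rw [hc (M.entry 1 1) a, mul_assoc, hc (M.entry 1 1) (M.entry 0 1), ← mul_assoc,
          hc a (M.entry 0 1)]
      rw [e]
      have t : leS (b * M.entry 1 1) b := by
        rw [hc b (M.entry 1 1)]; exact s4
      exact my_leS_trans (my_leS_mul_right s3 (M.entry 1 1)) t
  · -- case M*A*M' ≤ B
    have key : ∀ i j k l, leS (M.entry i k * (auxA n a b).entry k l * M'.entry l j)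
        ((auxB n a b).entry i j) := fun i j k l =>
      my_leS_trans (my_leS_mul_right (entry_mul_le M (auxA n a b) i l k) (M'.entry l j))
        (my_leS_trans (entry_mul_le (M * auxA n a b) M' i j l) (mat_leS_entry h1 i j))
    have R2 : leS (M.entry 1 1 * a * M'.entry 1 1) b := by
      have hk := key 1 1 1 1
      rwa [auxA_entry, auxB_entry, if_pos rfl, if_neg (fun hh => h10 hh.1)] at hk
    have R3 : leS (M.entry 0 0 * b * M'.entry 1 0) a := by
      have hk := key 0 0 0 1
      rwa [auxA_entry, auxB_entry, if_neg (fun hh => h10 hh.symm), if_pos ⟨rfl, rfl⟩] at hk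
    have R4 : leS (M.entry 1 1 * a * M'.entry 1 0) b := by
      have hk := key 1 0 1 1
      rwa [auxA_entry, auxB_entry, if_pos rfl, if_neg (fun hh => h10 hh.1)] at hk
    have R5 : leS (M.entry 0 0 * b * M'.entry 1 1) b := by
      have hk := key 0 1 0 1
      rwa [auxA_entry, auxB_entry, if_neg (fun hh => h10 hh.symm),
        if_neg (fun hh => h10 hh.2)] at hk
    have swap4 : ∀ x u v w : S, x * u * (v * w) = x * w * (v * u) := by
      intro x u v w
      rw [mul_assoc, mul_assoc]
      congr 1
      rw [hc v w, ← mul_assoc, hc u w, mul_assoc, hc u v]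
    refine ⟨M.entry 1 1 * a * M'.entry 1 1 * (M.entry 0 0 * M'.entry 1 0), ?_, ?_⟩
    · have t : leS (b * (M.entry 0 0 * M'.entry 1 0)) a := by
        rw [← mul_assoc, hc b (M.entry 0 0)]; exact R3
      exact my_leS_trans (my_leS_mul_right R2 (M.entry 0 0 * M'.entry 1 0)) t
    · rw [swap4 (M.entry 1 1 * a) (M'.entry 1 1) (M.entry 0 0) (M'.entry 1 0)]
      have t : leS (b * (M.entry 0 0 * M'.entry 1 1)) b := by
        rw [← mul_assoc, hc b (M.entry 0 0)]; exact R5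
      exact my_leS_trans (my_leS_mul_right R4 (M.entry 0 0 * M'.entry 1 1)) t
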